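/- Let φ be a continuous flow on a topological space X. If x ∈ int(ω(x)), then x is positively recurrent and closure(O(x)) = ω(x); in particular, a locally dense ω-limit set containing its generating point in its interior is the closure of a non-closed recurrent orbit (a Q-set). -/
import Mathlib


theorem mem_interior_omega_implies_recurrent_Qset
    {X : Type*} [TopologicalSpace X] (φ : ℝ → X → X)
    (hcont : Continuous fun p : ℝ × X => φ p.1 p.2)
    (h0 : ∀ x, φ 0 x = x)
    (hadd : ∀ s t x, φ (s + t) x = φ s (φ t x))
    (x : X)
    (hint : x ∈ interior (⋂ n : ℝ, closure {y | ∃ t > n, φ t x = y})) :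
    x ∈ (⋂ n : ℝ, closure {y | ∃ t > n, φ t x = y}) ∧
      closure {z | ∃ t : ℝ, φ t x = z} =
        (⋂ n : ℝ, closure {y | ∃ t > n, φ t x = y}) := by
  have hmem : x ∈ (⋂ n : ℝ, closure {y | ∃ t > n, φ t x = y}) := interior_subset hint
  refine ⟨hmem, le_antisymm ?_ ?_⟩
  · -- closure orbit ⊆ ω
    refine closure_minimal ?_ (isClosed_iInter fun n => isClosed_closure)
    rintro z ⟨s, rfl⟩
    refine Set.mem_iInter.2 fun n => ?_
    have hx : x ∈ closure {y | ∃ t > n - s, φ t x = y} := Set.mem_iInter.1 hmem (n - s)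
    have hc : Continuous fun y => φ s y :=
      hcont.comp (continuous_const.prodMk continuous_id)
    refine map_mem_closure hc hx ?_
    rintro z ⟨t, ht, rfl⟩
    exact ⟨s + t, by linarith, hadd s t x⟩
  · -- ω ⊆ closure orbit
    intro y hy
    have := Set.mem_iInter.1 hy 0
    refine closure_mono ?_ this
    rintro z ⟨t, _, rfl⟩
    exact ⟨t, rfl⟩
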